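/- Every finitely generated (as a topological group) profinite group is Hopfian as a topological group: any continuous surjective endomorphism φ : G → G of a topologically finitely generated profinite group G is an isomorphism. -/

import Mathlib

/-- A finitely generated group has finitely many homomorphisms into a finite group. -/
lemma aux_finite_hom {Δ M : Type*} [Group Δ] [Group M] [Finite M] (hΔ : Group.FG Δ) :
    Finite (Δ →* M) := by
  obtain ⟨T, hTtop, hTfin⟩ := Group.fg_iff.mp hΔ
  have : Finite T := hTfin
  have h : Function.Injective (fun f : Δ →* M => (fun t : T => f t)) := by
    intro f g hfg
    exact MonoidHom.eq_of_eqOn_dense hTtop (fun x hx => congrFun hfg ⟨x, hx⟩)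
  exact Finite.of_injective _ h

/-- A finitely generated group has finitely many subgroups of a given finite index. -/
lemma aux_finite_index {Δ : Type*} [Group Δ] (hΔ : Group.FG Δ) (n : ℕ) (hn : n ≠ 0) :
    Finite {K : Subgroup Δ // K.index = n} := by
  have hfin : Finite (Δ →* Equiv.Perm (Fin n)) := aux_finite_hom hΔ
  have key : ∀ K : {K : Subgroup Δ // K.index = n},
      ∃ fp : (Δ →* Equiv.Perm (Fin n)) × Fin n, ∀ g, g ∈ K.1 ↔ fp.1 g fp.2 = fp.2 := by
    rintro ⟨K, hK⟩
    have hcard : Nat.card (Δ ⧸ K) = n := by rw [← Subgroup.index_eq_card]; exact hK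
    have : Finite (Δ ⧸ K) := Nat.finite_of_card_ne_zero (by rw [hcard]; exact hn)
    obtain e : (Δ ⧸ K) ≃ Fin n := Finite.equivFinOfCardEq hcard
    refine ⟨⟨{ toFun := fun g => e.permCongr (MulAction.toPermHom Δ (Δ ⧸ K) g)
               map_one' := by
                 ext x
                 simp [Equiv.permCongr_apply]
               map_mul' := by
                 intro a b
                 ext x
                 simp [Equiv.permCongr_apply, mul_smul] },
             e ((1 : Δ) : Δ ⧸ K)⟩, ?_⟩
    intro g
    simp only [MonoidHom.coe_mk, OneHom.coe_mk, Equiv.permCongr_apply, Equiv.symm_apply_apply]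
    constructor
    · intro hg
      have : g • ((1 : Δ) : Δ ⧸ K) = ((1 : Δ) : Δ ⧸ K) := by
        rw [MulAction.Quotient.smul_mk]
        exact (QuotientGroup.eq).mpr (by simpa using K.inv_mem hg)
      rw [MulAction.toPermHom_apply, MulAction.toPerm_apply, this]
    · intro hg
      rw [MulAction.toPermHom_apply, MulAction.toPerm_apply] at hg
      have := e.injective hg
      rw [MulAction.Quotient.smul_mk] at this
      have := (QuotientGroup.eq).mp this
      simpa using K.inv_mem this
  choose F hF using key
  have hFinj : Function.Injective F := by
    intro K K' h
    apply Subtype.ext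
    ext g
    rw [hF K g, hF K' g, h]
  exact Finite.of_injective F hFinj

theorem stmt_5 {G : Type*} [Group G] [TopologicalSpace G] [IsTopologicalGroup G]
    [CompactSpace G] [T2Space G] [TotallyDisconnectedSpace G]
    (hfg : ∃ S : Finset G, Dense (Subgroup.closure (S : Set G) : Set G))
    (φ : G →* G) (hc : Continuous φ) (hs : Function.Surjective φ) :
    Function.Bijective φ := by
  obtain ⟨S, hS⟩ := hfg
  set Δ : Subgroup G := Subgroup.closure (S : Set G) with hΔdef
  have hΔfg : Group.FG Δ := Group.closure_finset_fg S
  -- Step 1: for each n ≠ 0, the set of open subgroups of index n is finite.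
  have step1 : ∀ n : ℕ, n ≠ 0 →
      Finite {H : Subgroup G // IsOpen (H : Set G) ∧ H.index = n} := by
    intro n hn
    -- map H to the pair (H.subgroupOf Δ viewed as index bound)
    -- first, injection into subgroups of Δ of index ≤ n, nonzero
    have main : ∀ H : {H : Subgroup G // IsOpen (H : Set G) ∧ H.index = n},
        (H.1.subgroupOf Δ).index ≠ 0 ∧ (H.1.subgroupOf Δ).index ≤ n := by
      rintro ⟨H, hHopen, hHidx⟩
      have hfinG : Finite (G ⧸ H) := Subgroup.quotient_finite_of_isOpen H hHopen
      -- embedding Δ ⧸ H.subgroupOf Δ ↪ G ⧸ H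
      have hemb : ∃ f : (Δ ⧸ H.subgroupOf Δ) → G ⧸ H, Function.Injective f := by
        refine ⟨Quotient.map' (fun x => (x : G)) ?_, ?_⟩
        · intro a b hab
          rw [QuotientGroup.leftRel_apply] at hab ⊢
          exact hab
        · intro a b
          induction a using Quotient.inductionOn'
          induction b using Quotient.inductionOn'
          intro hab
          rw [Quotient.map'_mk'', Quotient.map'_mk''] at hab
          rw [Quotient.eq''] at hab ⊢
          rw [QuotientGroup.leftRel_apply] at hab ⊢
          exact hab
      obtain ⟨f, hf⟩ := hemb
      have hfin : Finite (Δ ⧸ H.subgroupOf Δ) := Finite.of_injective f hf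
      constructor
      · exact Subgroup.index_ne_zero_of_finite
      · calc (H.subgroupOf Δ).index = Nat.card (Δ ⧸ H.subgroupOf Δ) :=
              Subgroup.index_eq_card _
          _ ≤ Nat.card (G ⧸ H) := Nat.card_le_card_of_injective f hf
          _ = H.index := (Subgroup.index_eq_card _).symm
          _ = n := hHidx
    -- injectivity of H ↦ H.subgroupOf Δ
    have inj : Function.Injective
        (fun H : {H : Subgroup G // IsOpen (H : Set G) ∧ H.index = n} =>
          H.1.subgroupOf Δ) := by
      rintro ⟨H, hHopen, hHidx⟩ ⟨H', hH'open, hH'idx⟩ h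
      simp only at h
      apply Subtype.ext
      -- H = closure of H ∩ Δ
      have key : ∀ (K : Subgroup G), IsOpen (K : Set G) →
          (K : Set G) = closure ((K : Set G) ∩ (Δ : Set G)) := by
        intro K hK
        apply subset_antisymm
        · intro x hx
          rw [mem_closure_iff]
          intro U hU hxU
          have : IsOpen (U ∩ (K : Set G)) := hU.inter hK
          have hne : (U ∩ (K : Set G)).Nonempty := ⟨x, hxU, hx⟩
          obtain ⟨y, hy⟩ := hS.exists_mem_open this hne
          exact ⟨y, ⟨hy.2.1, hy.2.2, hy.1⟩⟩
        · have : closure ((K : Set G) ∩ (Δ : Set G)) ⊆ closure (K : Set G) :=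
            closure_mono Set.inter_subset_left
          rwa [IsClosed.closure_eq (K.isClosed_of_isOpen hK)] at this
      have hsets : (H : Set G) ∩ (Δ : Set G) = (H' : Set G) ∩ (Δ : Set G) := by
        ext x
        constructor
        · rintro ⟨hx, hxΔ⟩
          have : (⟨x, hxΔ⟩ : Δ) ∈ H.subgroupOf Δ := hx
          rw [h] at this
          exact ⟨this, hxΔ⟩
        · rintro ⟨hx, hxΔ⟩
          have : (⟨x, hxΔ⟩ : Δ) ∈ H'.subgroupOf Δ := hx
          rw [← h] at this
          exact ⟨this, hxΔ⟩
      apply SetLike.coe_injective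
      rw [key H hHopen, key H' hH'open, hsets]
    -- now conclude finiteness
    have hfinset : Finite {K : Subgroup Δ // K.index ≠ 0 ∧ K.index ≤ n} := by
      have hsub : {K : Subgroup Δ | K.index ≠ 0 ∧ K.index ≤ n} ⊆
          ⋃ m ∈ Finset.Icc 1 n, {K : Subgroup Δ | K.index = m} := by
        rintro K ⟨hK0, hKn⟩
        simp only [Set.mem_iUnion, Finset.mem_Icc, Set.mem_setOf_eq]
        exact ⟨K.index, ⟨Nat.one_le_iff_ne_zero.mpr hK0, hKn⟩, rfl⟩
      have hfin : (⋃ m ∈ Finset.Icc 1 n, {K : Subgroup Δ | K.index = m}).Finite := by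
        apply Set.Finite.biUnion (Finset.finite_toSet _)
        intro m hm
        rw [Finset.mem_coe, Finset.mem_Icc] at hm
        exact Set.finite_coe_iff.mp (aux_finite_index hΔfg m (Nat.one_le_iff_ne_zero.mp hm.1))
      exact Set.finite_coe_iff.mpr (hfin.subset hsub)
    refine Finite.of_injective
      (fun H : {H : Subgroup G // IsOpen (H : Set G) ∧ H.index = n} =>
        (⟨H.1.subgroupOf Δ, (main H).1, (main H).2⟩ :
          {K : Subgroup Δ // K.index ≠ 0 ∧ K.index ≤ n})) ?_
    intro a b hab
    exact inj (congrArg Subtype.val hab)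
  -- Step 2: every open subgroup contains ker φ.
  have step2 : ∀ H : Subgroup G, IsOpen (H : Set G) → φ.ker ≤ H := by
    intro H hHopen
    have hfinG : Finite (G ⧸ H) := Subgroup.quotient_finite_of_isOpen H hHopen
    set n := H.index with hn
    have hn0 : n ≠ 0 := Subgroup.index_ne_zero_of_finite
    have : Finite {K : Subgroup G // IsOpen (K : Set G) ∧ K.index = n} := step1 n hn0
    -- the comap map
    set Ψ : {K : Subgroup G // IsOpen (K : Set G) ∧ K.index = n} →
        {K : Subgroup G // IsOpen (K : Set G) ∧ K.index = n} :=
      fun K => ⟨K.1.comap φ, by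
        constructor
        · exact hc.isOpen_preimage _ K.2.1
        · rw [Subgroup.index_comap_of_surjective _ hs]; exact K.2.2⟩ with hΨ
    have hΨinj : Function.Injective Ψ := by
      rintro ⟨K, hK⟩ ⟨K', hK'⟩ h
      apply Subtype.ext
      have h' : K.comap φ = K'.comap φ := congrArg Subtype.val h
      show K = K'
      rw [← Subgroup.map_comap_eq_self_of_surjective hs K,
          ← Subgroup.map_comap_eq_self_of_surjective hs K', h']
    have hΨsurj : Function.Surjective Ψ := Finite.surjective_of_injective hΨinj
    obtain ⟨K, hK⟩ := hΨsurj ⟨H, hHopen, hn.symm⟩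
    have hle : φ.ker ≤ K.1.comap φ := by
      intro x hx
      simp only [Subgroup.mem_comap]
      rw [MonoidHom.mem_ker.mp hx]
      exact K.1.one_mem
    have heq : K.1.comap φ = H := congrArg Subtype.val hK
    exact heq ▸ hle
  -- Step 3: ker φ = ⊥.
  constructor
  · rw [← MonoidHom.ker_eq_bot_iff]
    rw [eq_bot_iff]
    intro x hx
    by_contra hx1
    have hxne : x ≠ 1 := by simpa [Subgroup.mem_bot] using hx1
    have : TotallySeparatedSpace G := loc_compact_t2_tot_disc_iff_tot_sep.mp ‹_›
    obtain ⟨U, hU, h1U, hxU⟩ := exists_isClopen_of_totally_separated (Ne.symm hxne)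
    obtain ⟨H, hH⟩ := IsTopologicalGroup.exist_openNormalSubgroup_sub_clopen_nhds_of_one hU h1U
    have hxH : x ∈ H.toSubgroup := step2 H.toSubgroup H.isOpen hx
    exact hxU (hH hxH)
  · exact hs
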